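/- Let G be a topological group acting continuously on a compact Hausdorff space X, and let x ∈ X with cl(Gx) minimal. Then for every open neighborhood U of x, the set A = {g ∈ G : g·x ∈ U} is syndetic: there exists a finite set F ⊆ G with G = F·A. -/

import Mathlib

theorem stmt5 {G X : Type*} [Group G] [TopologicalSpace G] [IsTopologicalGroup G]
    [TopologicalSpace X] [CompactSpace X] [T2Space X]
    [MulAction G X] [ContinuousSMul G X]
    (x : X)
    (hmin : ∀ y ∈ closure (Set.range fun g : G => g • x),
      closure (Set.range fun g : G => g • y) = closure (Set.range fun g : G => g • x))
    (U : Set X) (hU : IsOpen U) (hx : x ∈ U) :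
    ∃ F : Finset G, ∀ g : G, ∃ f ∈ F, ∃ a : G, a • x ∈ U ∧ g = f * a := by
  set Y := closure (Set.range fun g : G => g • x) with hY
  have hYc : IsCompact Y := isClosed_closure.isCompact
  have hcover : Y ⊆ ⋃ g : G, (fun y => g • y) ⁻¹' U := by
    intro y hy
    have hdense := hmin y hy
    -- x ∈ U, and orbit of y is dense in Y which contains x
    have hxY : x ∈ closure (Set.range fun g : G => g • y) := by
      rw [hdense]
      exact subset_closure ⟨1, one_smul _ _⟩
    have : ((Set.range fun g : G => g • y) ∩ U).Nonempty := by
      have := mem_closure_iff.mp hxY U hU hx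
      exact this.imp fun z hz => ⟨hz.2, hz.1⟩
    obtain ⟨z, ⟨g, hg⟩, hzU⟩ := this
    exact Set.mem_iUnion.mpr ⟨g, by simpa [hg] using hzU⟩
  obtain ⟨F, hF⟩ := hYc.elim_finite_subcover (fun g : G => (fun y => g • y) ⁻¹' U)
    (fun g => hU.preimage (continuous_const_smul g)) hcover
  classical
  refine ⟨F.image (·⁻¹), fun g => ?_⟩
  have hgx : g • x ∈ Y := subset_closure ⟨g, rfl⟩
  obtain ⟨i, hiF, hi⟩ := Set.mem_iUnion₂.mp (hF hgx)
  refine ⟨i⁻¹, Finset.mem_image_of_mem _ hiF, i * g, ?_, by group⟩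
  simpa [mul_smul] using hi
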